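/- Let V, Y, Z, X, U be finitely supported random variables with U → V → X → (Y,Z) a Markov chain, and suppose the channel is less capable in the sense that I(X̃; Z) ≤ I(X̃; Y) for every input distribution X̃ fed into the channel p_{YZ|X}. Then I(V; Y | U) − I(V; Z | U) ≤ I(X; Y | U) − I(X; Z | U). -/

import Mathlib

open scoped Classical

/-- Shannon entropy (base 2) of the pushforward of a finitely supported
distribution `p` on `Ω` under a map `f : Ω → β`. -/
noncomputable def entP {Ω β : Type*} [Fintype Ω] [Fintype β] [DecidableEq β]
    (p : Ω → ℝ) (f : Ω → β) : ℝ :=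
  - ∑ b, (∑ ω, if f ω = b then p ω else 0) *
      Real.logb 2 (∑ ω, if f ω = b then p ω else 0)

/-- Plain Shannon entropy of a mass function. -/
noncomputable def ent' {α : Type*} [Fintype α] (a : α → ℝ) : ℝ :=
  - ∑ i, a i * Real.logb 2 (a i)

lemma ent'_equiv {α β : Type*} [Fintype α] [Fintype β] (e : β ≃ α) (a : α → ℝ) :
    ent' (fun b => a (e b)) = ent' a := by
  unfold ent'; rw [Equiv.sum_comp e (fun i => a i * Real.logb 2 (a i))]

lemma ent'_prod {α β : Type*} [Fintype α] [Fintype β] (a : α → ℝ) (k : α → β → ℝ)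
    (hks : ∀ i, a i ≠ 0 → ∑ b, k i b = 1) :
    ent' (fun q : α × β => a q.1 * k q.1 q.2) = ent' a + ∑ i, a i * ent' (k i) := by
  unfold ent'
  rw [Fintype.sum_prod_type]
  have key : ∀ i, ∑ b, a i * k i b * Real.logb 2 (a i * k i b)
      = a i * Real.logb 2 (a i) + a i * ∑ b, k i b * Real.logb 2 (k i b) := by
    intro i
    by_cases hai : a i = 0
    · simp [hai]
    · have : ∀ b, a i * k i b * Real.logb 2 (a i * k i b)
          = a i * Real.logb 2 (a i) * k i b + a i * (k i b * Real.logb 2 (k i b)) := by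
        intro b
        by_cases hk : k i b = 0
        · simp [hk]
        · rw [Real.logb, Real.log_mul hai hk]
          unfold Real.logb
          field_simp
      rw [Finset.sum_congr rfl (fun b _ => this b), Finset.sum_add_distrib,
        ← Finset.mul_sum, ← Finset.mul_sum, hks i hai, mul_one]
  rw [Finset.sum_congr rfl (fun i _ => key i)]
  simp [Finset.sum_add_distrib, Finset.mul_sum]
  ring

lemma entP_marg {Ω β γ : Type*} [Fintype Ω] [Fintype β] [Fintype γ] [DecidableEq β]
    (p : Ω → ℝ) (f : Ω → β) (e : Ω ≃ β × γ) (hf : ∀ ω, f ω = (e ω).1) :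
    entP p f = ent' (fun b => ∑ c, p (e.symm (b, c))) := by
  unfold entP ent'
  congr 1
  apply Finset.sum_congr rfl
  intro b _
  have h : (∑ ω, if f ω = b then p ω else 0) = ∑ c, p (e.symm (b, c)) := by
    rw [← Equiv.sum_comp e.symm (fun ω => if f ω = b then p ω else 0)]
    simp [hf, Fintype.sum_prod_type_right, Finset.sum_ite_eq']
  rw [h]

/-- for a Markov chain `U → V → X → (Y,Z)` with `(Y,Z)` generated
from `X` through a less capable channel `W` (i.e. `I(X̃;Z) ≤ I(X̃;Y)` for every
input distribution `X̃`), one has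
`I(V;Y|U) − I(V;Z|U) ≤ I(X;Y|U) − I(X;Z|U)`, where
`I(A;B|U) = H(A,U) + H(B,U) − H(A,B,U) − H(U)`. -/
theorem less_capable_conditional {U V X Y Z : Type*}
    [Fintype U] [Fintype V] [Fintype X] [Fintype Y] [Fintype Z]
    (pU : U → ℝ) (hpU : ∀ u, 0 ≤ pU u) (hpUs : ∑ u, pU u = 1)
    (pV : U → V → ℝ) (hpV : ∀ u v, 0 ≤ pV u v) (hpVs : ∀ u, ∑ v, pV u v = 1)
    (pX : V → X → ℝ) (hpX : ∀ v x, 0 ≤ pX v x) (hpXs : ∀ v, ∑ x, pX v x = 1)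
    (W : X → Y → Z → ℝ) (hW : ∀ x y z, 0 ≤ W x y z)
    (hWs : ∀ x, ∑ y, ∑ z, W x y z = 1)
    (p : U × V × X × Y × Z → ℝ)
    (hp : ∀ ω, p ω = pU ω.1 * pV ω.1 ω.2.1 * pX ω.2.1 ω.2.2.1 *
        W ω.2.2.1 ω.2.2.2.1 ω.2.2.2.2)
    -- the channel `W` is less capable: for every input distribution `q` on `X`,
    -- `I(X;Z) ≤ I(X;Y)` for the joint law `q(x) W(y,z|x)`
    (hlc : ∀ q : X → ℝ, (∀ x, 0 ≤ q x) → (∑ x, q x = 1) →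
      entP (fun ω : X × Y × Z => q ω.1 * W ω.1 ω.2.1 ω.2.2) (fun ω => ω.1)
        + entP (fun ω : X × Y × Z => q ω.1 * W ω.1 ω.2.1 ω.2.2) (fun ω => ω.2.2)
        - entP (fun ω : X × Y × Z => q ω.1 * W ω.1 ω.2.1 ω.2.2)
            (fun ω => (ω.1, ω.2.2))
      ≤ entP (fun ω : X × Y × Z => q ω.1 * W ω.1 ω.2.1 ω.2.2) (fun ω => ω.1)
        + entP (fun ω : X × Y × Z => q ω.1 * W ω.1 ω.2.1 ω.2.2) (fun ω => ω.2.1)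
        - entP (fun ω : X × Y × Z => q ω.1 * W ω.1 ω.2.1 ω.2.2)
            (fun ω => (ω.1, ω.2.1))) :
    -- I(V;Y|U) − I(V;Z|U) ≤ I(X;Y|U) − I(X;Z|U)
    (entP p (fun ω => (ω.2.1, ω.1)) + entP p (fun ω => (ω.2.2.2.1, ω.1))
        - entP p (fun ω => (ω.2.1, ω.2.2.2.1, ω.1)) - entP p (fun ω => ω.1))
      - (entP p (fun ω => (ω.2.1, ω.1)) + entP p (fun ω => (ω.2.2.2.2, ω.1))
        - entP p (fun ω => (ω.2.1, ω.2.2.2.2, ω.1)) - entP p (fun ω => ω.1))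
    ≤ (entP p (fun ω => (ω.2.2.1, ω.1)) + entP p (fun ω => (ω.2.2.2.1, ω.1))
        - entP p (fun ω => (ω.2.2.1, ω.2.2.2.1, ω.1)) - entP p (fun ω => ω.1))
      - (entP p (fun ω => (ω.2.2.1, ω.1)) + entP p (fun ω => (ω.2.2.2.2, ω.1))
        - entP p (fun ω => (ω.2.2.1, ω.2.2.2.2, ω.1)) - entP p (fun ω => ω.1)) := by
  -- row sum facts
  have rowWZ : ∀ x, ∑ z, ∑ y, W x y z = 1 := by
    intro x; rw [Finset.sum_comm]; exact hWs x
  have rowY : ∀ v, ∑ y, ∑ x, pX v x * ∑ z, W x y z = 1 := by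
    intro v; rw [Finset.sum_comm]
    have h : ∀ x, ∑ y, pX v x * ∑ z, W x y z = pX v x := by
      intro x; rw [← Finset.mul_sum, hWs, mul_one]
    rw [Finset.sum_congr rfl (fun x _ => h x)]; exact hpXs v
  have rowZ : ∀ v, ∑ z, ∑ x, pX v x * ∑ y, W x y z = 1 := by
    intro v; rw [Finset.sum_comm]
    have h : ∀ x, ∑ z, pX v x * ∑ y, W x y z = pX v x := by
      intro x; rw [← Finset.mul_sum, rowWZ, mul_one]
    rw [Finset.sum_congr rfl (fun x _ => h x)]; exact hpXs v
  -- the four joint entropies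
  have hA : entP p (fun ω => (ω.2.1, ω.2.2.2.1, ω.1))
      = ent' (fun q : U × V => pU q.1 * pV q.1 q.2)
        + ∑ q : U × V, (pU q.1 * pV q.1 q.2) *
            ent' (fun y => ∑ x, pX q.2 x * ∑ z, W x y z) := by
    rw [entP_marg p (fun ω => (ω.2.1, ω.2.2.2.1, ω.1))
      (⟨fun ω => ((ω.2.1, ω.2.2.2.1, ω.1), (ω.2.2.1, ω.2.2.2.2)),
        fun q => (q.1.2.2, q.1.1, q.2.1, q.1.2.1, q.2.2),
        fun _ => rfl, fun _ => rfl⟩ : (U × V × X × Y × Z) ≃ (V × Y × U) × (X × Z))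
      (fun _ => rfl)]
    rw [← ent'_equiv
      (⟨fun q => (q.1.2, q.2, q.1.1), fun b => ((b.2.2, b.1), b.2.1),
        fun _ => rfl, fun _ => rfl⟩ : ((U × V) × Y) ≃ (V × Y × U))]
    have hfun : (fun q : (U × V) × Y => ∑ c : X × Z,
          p (q.1.1, q.1.2, c.1, q.2, c.2))
        = fun q => (pU q.1.1 * pV q.1.1 q.1.2) *
            (∑ x, pX q.1.2 x * ∑ z, W x q.2 z) := by
      funext q
      simp only [hp, Fintype.sum_prod_type, Finset.mul_sum]
      apply Finset.sum_congr rfl; intro x _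
      apply Finset.sum_congr rfl; intro z _
      ring
    simp only [Equiv.coe_fn_mk, Equiv.coe_fn_symm_mk]
    rw [hfun]
    exact ent'_prod (fun q : U × V => pU q.1 * pV q.1 q.2)
      (fun q y => ∑ x, pX q.2 x * ∑ z, W x y z) (fun q _ => rowY q.2)
  have hB : entP p (fun ω => (ω.2.1, ω.2.2.2.2, ω.1))
      = ent' (fun q : U × V => pU q.1 * pV q.1 q.2)
        + ∑ q : U × V, (pU q.1 * pV q.1 q.2) *
            ent' (fun z => ∑ x, pX q.2 x * ∑ y, W x y z) := by
    rw [entP_marg p (fun ω => (ω.2.1, ω.2.2.2.2, ω.1))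
      (⟨fun ω => ((ω.2.1, ω.2.2.2.2, ω.1), (ω.2.2.1, ω.2.2.2.1)),
        fun q => (q.1.2.2, q.1.1, q.2.1, q.2.2, q.1.2.1),
        fun _ => rfl, fun _ => rfl⟩ : (U × V × X × Y × Z) ≃ (V × Z × U) × (X × Y))
      (fun _ => rfl)]
    rw [← ent'_equiv
      (⟨fun q => (q.1.2, q.2, q.1.1), fun b => ((b.2.2, b.1), b.2.1),
        fun _ => rfl, fun _ => rfl⟩ : ((U × V) × Z) ≃ (V × Z × U))]
    have hfun : (fun q : (U × V) × Z => ∑ c : X × Y,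
          p (q.1.1, q.1.2, c.1, c.2, q.2))
        = fun q => (pU q.1.1 * pV q.1.1 q.1.2) *
            (∑ x, pX q.1.2 x * ∑ y, W x y q.2) := by
      funext q
      simp only [hp, Fintype.sum_prod_type, Finset.mul_sum]
      apply Finset.sum_congr rfl; intro x _
      apply Finset.sum_congr rfl; intro y _
      ring
    simp only [Equiv.coe_fn_mk, Equiv.coe_fn_symm_mk]
    rw [hfun]
    exact ent'_prod (fun q : U × V => pU q.1 * pV q.1 q.2)
      (fun q z => ∑ x, pX q.2 x * ∑ y, W x y z) (fun q _ => rowZ q.2)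
  have hC : entP p (fun ω => (ω.2.2.1, ω.2.2.2.1, ω.1))
      = ent' (fun q : U × X => ∑ v, pU q.1 * pV q.1 v * pX v q.2)
        + ∑ q : U × X, (∑ v, pU q.1 * pV q.1 v * pX v q.2) *
            ent' (fun y => ∑ z, W q.2 y z) := by
    rw [entP_marg p (fun ω => (ω.2.2.1, ω.2.2.2.1, ω.1))
      (⟨fun ω => ((ω.2.2.1, ω.2.2.2.1, ω.1), (ω.2.1, ω.2.2.2.2)),
        fun q => (q.1.2.2, q.2.1, q.1.1, q.1.2.1, q.2.2),
        fun _ => rfl, fun _ => rfl⟩ : (U × V × X × Y × Z) ≃ (X × Y × U) × (V × Z))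
      (fun _ => rfl)]
    rw [← ent'_equiv
      (⟨fun q => (q.1.2, q.2, q.1.1), fun b => ((b.2.2, b.1), b.2.1),
        fun _ => rfl, fun _ => rfl⟩ : ((U × X) × Y) ≃ (X × Y × U))]
    have hfun : (fun q : (U × X) × Y => ∑ c : V × Z,
          p (q.1.1, c.1, q.1.2, q.2, c.2))
        = fun q => (∑ v, pU q.1.1 * pV q.1.1 v * pX v q.1.2) *
            (∑ z, W q.1.2 q.2 z) := by
      funext q
      simp only [hp, Fintype.sum_prod_type]
      rw [Finset.sum_mul_sum]
    simp only [Equiv.coe_fn_mk, Equiv.coe_fn_symm_mk]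
    rw [hfun]
    exact ent'_prod (fun q : U × X => ∑ v, pU q.1 * pV q.1 v * pX v q.2)
      (fun q y => ∑ z, W q.2 y z) (fun q _ => hWs q.2)
  have hD : entP p (fun ω => (ω.2.2.1, ω.2.2.2.2, ω.1))
      = ent' (fun q : U × X => ∑ v, pU q.1 * pV q.1 v * pX v q.2)
        + ∑ q : U × X, (∑ v, pU q.1 * pV q.1 v * pX v q.2) *
            ent' (fun z => ∑ y, W q.2 y z) := by
    rw [entP_marg p (fun ω => (ω.2.2.1, ω.2.2.2.2, ω.1))
      (⟨fun ω => ((ω.2.2.1, ω.2.2.2.2, ω.1), (ω.2.1, ω.2.2.2.1)),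
        fun q => (q.1.2.2, q.2.1, q.1.1, q.2.2, q.1.2.1),
        fun _ => rfl, fun _ => rfl⟩ : (U × V × X × Y × Z) ≃ (X × Z × U) × (V × Y))
      (fun _ => rfl)]
    rw [← ent'_equiv
      (⟨fun q => (q.1.2, q.2, q.1.1), fun b => ((b.2.2, b.1), b.2.1),
        fun _ => rfl, fun _ => rfl⟩ : ((U × X) × Z) ≃ (X × Z × U))]
    have hfun : (fun q : (U × X) × Z => ∑ c : V × Y,
          p (q.1.1, c.1, q.1.2, c.2, q.2))
        = fun q => (∑ v, pU q.1.1 * pV q.1.1 v * pX v q.1.2) *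
            (∑ y, W q.1.2 y q.2) := by
      funext q
      simp only [hp, Fintype.sum_prod_type]
      rw [Finset.sum_mul_sum]
    simp only [Equiv.coe_fn_mk, Equiv.coe_fn_symm_mk]
    rw [hfun]
    exact ent'_prod (fun q : U × X => ∑ v, pU q.1 * pV q.1 v * pX v q.2)
      (fun q z => ∑ y, W q.2 y z) (fun q _ => rowWZ q.2)
  -- per-v inequality from the less capable hypothesis
  have hkey : ∀ v, ent' (fun z => ∑ x, pX v x * ∑ y, W x y z)
      - ∑ x, pX v x * ent' (fun z => ∑ y, W x y z)
      ≤ ent' (fun y => ∑ x, pX v x * ∑ z, W x y z)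
      - ∑ x, pX v x * ent' (fun y => ∑ z, W x y z) := by
    intro v
    have H := hlc (pX v) (hpX v) (hpXs v)
    have h1 : entP (fun ω : X × Y × Z => pX v ω.1 * W ω.1 ω.2.1 ω.2.2)
        (fun ω => ω.1) = ent' (pX v) := by
      rw [entP_marg _ (fun ω : X × Y × Z => ω.1) (Equiv.refl (X × (Y × Z))) (fun _ => rfl)]
      congr 1; funext x
      simp only [Equiv.refl_symm, Equiv.refl_apply, ← Finset.mul_sum]
      rw [show (∑ c : Y × Z, W x c.1 c.2) = ∑ y, ∑ z, W x y z from
        Fintype.sum_prod_type _, hWs, mul_one]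
    have h2 : entP (fun ω : X × Y × Z => pX v ω.1 * W ω.1 ω.2.1 ω.2.2)
        (fun ω => ω.2.2) = ent' (fun z => ∑ x, pX v x * ∑ y, W x y z) := by
      rw [entP_marg _ (fun ω : X × Y × Z => ω.2.2)
        (⟨fun ω => (ω.2.2, ω.1, ω.2.1), fun q => (q.2.1, q.2.2, q.1),
          fun _ => rfl, fun _ => rfl⟩ : (X × Y × Z) ≃ Z × (X × Y)) (fun _ => rfl)]
      congr 1; funext z
      simp only [Equiv.coe_fn_symm_mk]
      rw [Fintype.sum_prod_type]
      apply Finset.sum_congr rfl; intro x _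
      simp [← Finset.mul_sum]
    have h3 : entP (fun ω : X × Y × Z => pX v ω.1 * W ω.1 ω.2.1 ω.2.2)
        (fun ω => (ω.1, ω.2.2))
        = ent' (pX v) + ∑ x, pX v x * ent' (fun z => ∑ y, W x y z) := by
      rw [entP_marg _ (fun ω : X × Y × Z => (ω.1, ω.2.2))
        (⟨fun ω => ((ω.1, ω.2.2), ω.2.1), fun q => (q.1.1, q.2, q.1.2),
          fun _ => rfl, fun _ => rfl⟩ : (X × Y × Z) ≃ (X × Z) × Y) (fun _ => rfl)]
      have hfun : (fun b : X × Z => ∑ y, pX v b.1 * W b.1 y b.2)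
          = fun b : X × Z => pX v b.1 * ∑ y, W b.1 y b.2 := by
        funext b; rw [← Finset.mul_sum]
      simp only [Equiv.coe_fn_mk, Equiv.coe_fn_symm_mk]
      rw [hfun]
      exact ent'_prod _ _ (fun x _ => rowWZ x)
    have h4 : entP (fun ω : X × Y × Z => pX v ω.1 * W ω.1 ω.2.1 ω.2.2)
        (fun ω => ω.2.1) = ent' (fun y => ∑ x, pX v x * ∑ z, W x y z) := by
      rw [entP_marg _ (fun ω : X × Y × Z => ω.2.1)
        (⟨fun ω => (ω.2.1, ω.1, ω.2.2), fun q => (q.2.1, q.1, q.2.2),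
          fun _ => rfl, fun _ => rfl⟩ : (X × Y × Z) ≃ Y × (X × Z)) (fun _ => rfl)]
      congr 1; funext y
      simp only [Equiv.coe_fn_symm_mk]
      rw [Fintype.sum_prod_type]
      apply Finset.sum_congr rfl; intro x _
      simp [← Finset.mul_sum]
    have h5 : entP (fun ω : X × Y × Z => pX v ω.1 * W ω.1 ω.2.1 ω.2.2)
        (fun ω => (ω.1, ω.2.1))
        = ent' (pX v) + ∑ x, pX v x * ent' (fun y => ∑ z, W x y z) := by
      rw [entP_marg _ (fun ω : X × Y × Z => (ω.1, ω.2.1))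
        (⟨fun ω => ((ω.1, ω.2.1), ω.2.2), fun q => (q.1.1, q.1.2, q.2),
          fun _ => rfl, fun _ => rfl⟩ : (X × Y × Z) ≃ (X × Y) × Z) (fun _ => rfl)]
      have hfun : (fun b : X × Y => ∑ z, pX v b.1 * W b.1 b.2 z)
          = fun b : X × Y => pX v b.1 * ∑ z, W b.1 b.2 z := by
        funext b; rw [← Finset.mul_sum]
      simp only [Equiv.coe_fn_mk, Equiv.coe_fn_symm_mk]
      rw [hfun]
      exact ent'_prod _ _ (fun x _ => hWs x)
    rw [h1, h2, h3, h4, h5] at H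
    linarith
  -- main inequality between the conditional-entropy parts
  have hmain : (∑ q : U × V, (pU q.1 * pV q.1 q.2) *
        ent' (fun z => ∑ x, pX q.2 x * ∑ y, W x y z))
      - (∑ q : U × V, (pU q.1 * pV q.1 q.2) *
        ent' (fun y => ∑ x, pX q.2 x * ∑ z, W x y z))
      ≤ (∑ q : U × X, (∑ v, pU q.1 * pV q.1 v * pX v q.2) *
        ent' (fun z => ∑ y, W q.2 y z))
      - (∑ q : U × X, (∑ v, pU q.1 * pV q.1 v * pX v q.2) *
        ent' (fun y => ∑ z, W q.2 y z)) := by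
    rw [← Finset.sum_sub_distrib, ← Finset.sum_sub_distrib]
    have hL : ∀ q : U × V, (pU q.1 * pV q.1 q.2) *
          ent' (fun z => ∑ x, pX q.2 x * ∑ y, W x y z)
        - (pU q.1 * pV q.1 q.2) * ent' (fun y => ∑ x, pX q.2 x * ∑ z, W x y z)
        = (pU q.1 * pV q.1 q.2) *
          (ent' (fun z => ∑ x, pX q.2 x * ∑ y, W x y z)
            - ent' (fun y => ∑ x, pX q.2 x * ∑ z, W x y z)) := by
      intro q; ring
    have hR : (∑ q : U × X, ((∑ v, pU q.1 * pV q.1 v * pX v q.2) *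
          ent' (fun z => ∑ y, W q.2 y z)
        - (∑ v, pU q.1 * pV q.1 v * pX v q.2) * ent' (fun y => ∑ z, W q.2 y z)))
        = ∑ q : U × V, (pU q.1 * pV q.1 q.2) *
            ∑ x, pX q.2 x * (ent' (fun z => ∑ y, W x y z)
              - ent' (fun y => ∑ z, W x y z)) := by
      rw [Fintype.sum_prod_type, Fintype.sum_prod_type]
      apply Finset.sum_congr rfl; intro u _
      simp only []
      have lhs1 : ∀ x : X, (∑ v, pU u * pV u v * pX v x) *
            ent' (fun z => ∑ y, W x y z)
          - (∑ v, pU u * pV u v * pX v x) * ent' (fun y => ∑ z, W x y z)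
          = ∑ v, pU u * pV u v * (pX v x *
              (ent' (fun z => ∑ y, W x y z) - ent' (fun y => ∑ z, W x y z))) := by
        intro x
        rw [← mul_sub, Finset.sum_mul]
        exact Finset.sum_congr rfl (fun v _ => by ring)
      rw [Finset.sum_congr rfl (fun x _ => lhs1 x), Finset.sum_comm]
      apply Finset.sum_congr rfl; intro v _
      rw [Finset.mul_sum]
    rw [Finset.sum_congr rfl (fun q _ => hL q), hR]
    apply Finset.sum_le_sum
    intro q _
    apply mul_le_mul_of_nonneg_left _ (mul_nonneg (hpU q.1) (hpV q.1 q.2))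
    have h6 : ∑ x, pX q.2 x * (ent' (fun z => ∑ y, W x y z)
          - ent' (fun y => ∑ z, W x y z))
        = (∑ x, pX q.2 x * ent' (fun z => ∑ y, W x y z))
          - ∑ x, pX q.2 x * ent' (fun y => ∑ z, W x y z) := by
      rw [← Finset.sum_sub_distrib]
      apply Finset.sum_congr rfl; intro x _; ring
    rw [h6]
    have := hkey q.2
    linarith
  rw [hA, hB, hC, hD] at *
  linarith
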